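/- With the same setup, R̃ ≥ (cεW·d^{1/q})/√n for a universal constant c > 0, where c is the Khintchine constant satisfying E[|Σᵢσᵢ|] ≥ c√n. -/

import Mathlib

/-- Coordinatewise sign, with sgn(0) = 1. -/
noncomputable def sgn (t : ℝ) : ℝ := if 0 ≤ t then 1 else -1

/-- The ℓq norm of a vector in ℝ^d (for real q ≥ 1). -/
noncomputable def lqnorm (d : ℕ) (q : ℝ) (v : Fin d → ℝ) : ℝ :=
  (∑ i, |v i| ^ q) ^ (1 / q)

/-- Rademacher sign associated with a Boolean. -/
noncomputable def sg (b : Bool) : ℝ := if b then 1 else -1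

lemma key (a b : ℝ) : 2 * |b| ≤ |a - b * sgn a| + |(-a) - (-b) * sgn (-a)| := by
  unfold sgn
  split_ifs with h1 h2 h2
  · have ha : a = 0 := le_antisymm (by linarith) h1
    simp [ha, abs_neg]; ring_nf
    rcases abs_cases b with ⟨e, _⟩ | ⟨e, _⟩ <;> simp [abs_sub_comm] <;> linarith
  · have h3 : |a - b * 1| + |-a - -b * -1| = |a - b| + |a + b| := by
      rw [show (-a - -b * -1) = -(a + b) by ring, abs_neg]; ring_nf
    rw [h3]
    have h4 : |(a+b) - (a-b)| = 2 * |b| := by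
      rw [show (a+b)-(a-b) = 2*b by ring, abs_mul]; simp
    linarith [abs_sub (a+b) (a-b), h4]
  · have h3 : |a - b * -1| + |-a - -b * 1| = |a + b| + |a - b| := by
      rw [show (-a - -b * 1) = -(a - b) by ring, abs_neg]; ring_nf
    rw [h3]
    have h4 : |(a+b) - (a-b)| = 2 * |b| := by
      rw [show (a+b)-(a-b) = 2*b by ring, abs_mul]; simp
    calc 2*|b| = |(a+b)-(a-b)| := h4.symm
    _ ≤ |a+b| + |a-b| := abs_sub _ _
  · exfalso; push_neg at h1 h2; linarith

lemma lq_lower (d : ℕ) (q : ℝ) (hq : 1 ≤ q) (M : ℝ) (hM : 0 ≤ M)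
    (u w : Fin d → ℝ) (h : ∀ j, M ≤ |u j| + |w j|) :
    M * (d : ℝ) ^ (1/q) ≤ lqnorm d q u + lqnorm d q w := by
  have hq0 : 0 < q := by linarith
  have mink := Real.Lp_add_le Finset.univ (fun j => |u j|) (fun j => |w j|) hq
  simp only [abs_abs] at mink
  have step1 : M * (d : ℝ) ^ (1/q) ≤ (∑ j : Fin d, (|(|u j| + |w j|)|) ^ q) ^ (1/q) := by
    have e1 : M * (d : ℝ) ^ (1/q) = (∑ _j : Fin d, M ^ q) ^ (1/q) := by
      rw [Finset.sum_const, Finset.card_univ, Fintype.card_fin, nsmul_eq_mul,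
        Real.mul_rpow (by positivity) (by positivity),
        ← Real.rpow_mul hM,
        mul_one_div_cancel (ne_of_gt hq0), Real.rpow_one]
      ring
    rw [e1]
    apply Real.rpow_le_rpow (by positivity) _ (by positivity)
    apply Finset.sum_le_sum
    intro j _
    rw [abs_of_nonneg (by positivity : (0:ℝ) ≤ |u j| + |w j|)]
    exact Real.rpow_le_rpow hM (h j) hq0.le
  exact le_trans step1 mink

lemma sg_not (b : Bool) : sg (!b) = - sg b := by cases b <;> simp [sg]

/-- Lower bound: for any Khintchine constant c > 0 with E[|Σᵢσᵢ|] ≥ c√n,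
the adversarial Rademacher complexity
R̃ = (W/n)·E_σ‖Σᵢσᵢyᵢxᵢ − (εΣᵢσᵢ)·sgn(Σᵢσᵢyᵢxᵢ)‖_q satisfies
R̃ ≥ cεW·d^{1/q}/√n. -/
theorem stmt_11 (n d : ℕ) (hn : 0 < n) (x : Fin n → Fin d → ℝ) (y : Fin n → ℝ)
    (hy : ∀ i, y i = 1 ∨ y i = -1) (ε W p q c : ℝ) (hε : 0 ≤ ε) (hW : 0 < W)
    (hp : 1 ≤ p) (hq : 1 ≤ q) (hpq : 1 / p + 1 / q = 1) (hc : 0 < c)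
    (hkh : c * Real.sqrt n ≤ (∑ s : Fin n → Bool, |∑ i, sg (s i)|) / 2 ^ n) :
    c * ε * W * (d : ℝ) ^ (1 / q) / Real.sqrt n ≤
      (∑ s : Fin n → Bool, (W / n) *
          lqnorm d q (fun j => (∑ i, sg (s i) * y i * x i j)
            - (ε * ∑ i, sg (s i)) * sgn (∑ i, sg (s i) * y i * x i j))) / 2 ^ n := by
  set T : (Fin n → Bool) → ℝ := fun s => ∑ i, sg (s i) with hT
  set v : (Fin n → Bool) → Fin d → ℝ := fun s j => ∑ i, sg (s i) * y i * x i j with hv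
  set F : (Fin n → Bool) → ℝ :=
    fun s => lqnorm d q (fun j => v s j - (ε * T s) * sgn (v s j)) with hF
  have hTneg : ∀ s, T (fun i => !(s i)) = - T s := by
    intro s; simp only [hT, sg_not, Finset.sum_neg_distrib]
  have hvneg : ∀ s j, v (fun i => !(s i)) j = - v s j := by
    intro s j
    simp only [hv, sg_not]
    rw [← Finset.sum_neg_distrib]
    congr 1; funext i; ring
  -- pairwise lower bound
  have pair : ∀ s, 2 * (ε * |T s|) * (d : ℝ) ^ (1/q) ≤ F s + F (fun i => !(s i)) := by
    intro s
    apply lq_lower d q hq _ (by positivity)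
    intro j
    have := key (v s j) (ε * T s)
    have e2 : |ε * T s| = ε * |T s| := by rw [abs_mul, abs_of_nonneg hε]
    calc 2 * (ε * |T s|) = 2 * |ε * T s| := by rw [e2]
    _ ≤ |v s j - (ε * T s) * sgn (v s j)| +
        |(-(v s j)) - (-(ε * T s)) * sgn (-(v s j))| := key (v s j) (ε * T s)
    _ = |v s j - (ε * T s) * sgn (v s j)| +
        |v (fun i => !(s i)) j - (ε * T (fun i => !(s i))) * sgn (v (fun i => !(s i)) j)| := by
      rw [hvneg, hTneg]; ring_nf
  -- sum over pairs
  have hinv : Function.Involutive (fun s : Fin n → Bool => fun i => !(s i)) := by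
    intro s; funext i; simp
  have sum_neg : ∑ s : Fin n → Bool, F (fun i => !(s i)) = ∑ s : Fin n → Bool, F s :=
    Fintype.sum_bijective _ hinv.bijective _ _ (fun s => rfl)
  have sum_pair : ∑ s : Fin n → Bool, 2 * (ε * |T s|) * (d : ℝ) ^ (1/q) ≤
      2 * ∑ s : Fin n → Bool, F s := by
    calc ∑ s : Fin n → Bool, 2 * (ε * |T s|) * (d : ℝ) ^ (1/q)
        ≤ ∑ s : Fin n → Bool, (F s + F (fun i => !(s i))) :=
          Finset.sum_le_sum (fun s _ => pair s)
      _ = 2 * ∑ s : Fin n → Bool, F s := by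
          rw [Finset.sum_add_distrib, sum_neg]; ring
  have sumF : ε * (d : ℝ) ^ (1/q) * (∑ s : Fin n → Bool, |T s|) ≤
      ∑ s : Fin n → Bool, F s := by
    have : ∑ s : Fin n → Bool, 2 * (ε * |T s|) * (d : ℝ) ^ (1/q)
        = 2 * (ε * (d : ℝ) ^ (1/q) * ∑ s : Fin n → Bool, |T s|) := by
      rw [Finset.mul_sum, Finset.mul_sum]
      congr 1; funext s; ring
    linarith [sum_pair, this ▸ sum_pair]
  -- Khintchine bound
  have hsn : (0:ℝ) < Real.sqrt n := Real.sqrt_pos.2 (by exact_mod_cast hn)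
  have h2n : (0:ℝ) < 2 ^ n := by positivity
  have hkh' : c * Real.sqrt n * 2 ^ n ≤ ∑ s : Fin n → Bool, |T s| := by
    rw [← le_div_iff₀ h2n]; exact hkh
  have hnR : (0:ℝ) < (n:ℝ) := by exact_mod_cast hn
  have hsum : ε * (d : ℝ) ^ (1/q) * (c * Real.sqrt n * 2 ^ n) ≤
      ∑ s : Fin n → Bool, F s := by
    refine le_trans ?_ sumF
    apply mul_le_mul_of_nonneg_left hkh' (by positivity)
  -- final arithmetic
  have hrw : ∑ s : Fin n → Bool, (W / n) * F s = (W / n) * ∑ s : Fin n → Bool, F s := by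
    rw [Finset.mul_sum]
  rw [hrw, div_le_div_iff₀ hsn h2n]
  have hss : Real.sqrt (n:ℝ) * Real.sqrt (n:ℝ) = (n:ℝ) := Real.mul_self_sqrt hnR.le
  have e : (W / (n:ℝ)) * (ε * (d:ℝ) ^ (1/q) * (c * Real.sqrt (n:ℝ) * 2 ^ n)) * Real.sqrt (n:ℝ)
      = c * ε * W * (d:ℝ) ^ (1/q) * 2 ^ n := by
    field_simp
    linear_combination (ε * (d:ℝ) ^ (1/q)) * hss
  calc c * ε * W * (d:ℝ) ^ (1/q) * 2 ^ n
      = (W / (n:ℝ)) * (ε * (d:ℝ) ^ (1/q) * (c * Real.sqrt (n:ℝ) * 2 ^ n)) * Real.sqrt (n:ℝ) :=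
        e.symm
    _ ≤ (W / (n:ℝ)) * (∑ s : Fin n → Bool, F s) * Real.sqrt (n:ℝ) :=
        mul_le_mul_of_nonneg_right (mul_le_mul_of_nonneg_left hsum (by positivity)) hsn.le
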